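/- Let D be a finite sequence of positive integers with entry sum S. If D contains an entry strictly greater than S/2, or if D contains at least two entries equal to S/2 and D is not the sequence (1, 1), then D has no bipartite realization. -/
import Mathlib


/-- A pair of degree sequences (given as multisets) is *bigraphic* if there is a simple
bipartite graph (encoded as its set of edges between the two vertex classes) whose
degree multisets on the two sides are exactly `D1` and `D2`. -/
def BigraphicM (D1 D2 : Multiset ℕ) : Prop :=
  ∃ E : Finset (Fin (Multiset.card D1) × Fin (Multiset.card D2)),
    D1 = Finset.univ.val.map (fun u => (E.filter (fun p => p.1 = u)).card) ∧
    D2 = Finset.univ.val.map (fun v => (E.filter (fun p => p.2 = v)).card)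

/-- A degree sequence has a bipartite realization iff its entries can be split into two
multisets forming a bigraphic pair. -/
def HasBipartiteRealization (D : Multiset ℕ) : Prop :=
  ∃ D1 D2 : Multiset ℕ, D1 + D2 = D ∧ BigraphicM D1 D2

/-- A sequence of positive integers with an entry exceeding half the degree sum, or with
at least two entries equal to half the degree sum (other than the sequence `(1,1)`),
has no bipartite realization. -/

lemma aux_eq_single {M : Multiset ℕ} {c : ℕ} (hpos : ∀ d ∈ M, 0 < d)
    (hsum : M.sum = c) (hc : c ∈ M) : M = {c} := by
  obtain ⟨M', rfl⟩ := Multiset.exists_cons_of_mem hc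
  simp only [Multiset.sum_cons] at hsum
  have h0 : M'.sum = 0 := by omega
  have hM' : M' = 0 := by
    rw [Multiset.eq_zero_iff_forall_notMem]
    intro x hx
    have := hpos x (Multiset.mem_cons_of_mem hx)
    have := Multiset.sum_eq_zero_iff.mp h0 x hx
    omega
  simp [hM']

lemma aux_sum {m n : ℕ} (E : Finset (Fin m × Fin n)) :
    ((Finset.univ.val.map (fun u => (E.filter (fun p => p.1 = u)).card)).sum = E.card) ∧
    ((Finset.univ.val.map (fun v => (E.filter (fun p => p.2 = v)).card)).sum = E.card) := by
  constructor
  · have := Finset.card_eq_sum_card_fiberwise (s := E) (t := Finset.univ)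
      (f := Prod.fst) (fun x _ => Finset.mem_univ x.1)
    exact this.symm
  · have := Finset.card_eq_sum_card_fiberwise (s := E) (t := Finset.univ)
      (f := Prod.snd) (fun x _ => Finset.mem_univ x.2)
    exact this.symm

theorem stmt16 (D : Multiset ℕ) (hpos : ∀ d ∈ D, 0 < d)
    (h : (∃ d ∈ D, 2 * d > D.sum) ∨
      (2 ≤ Multiset.card (D.filter (fun d => 2 * d = D.sum)) ∧ D ≠ {1, 1})) :
    ¬ HasBipartiteRealization D := by
  rintro ⟨D1, D2, hD, E, h1, h2⟩
  set c := E.card with hc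
  have hsum1 : D1.sum = c := by rw [h1]; exact (aux_sum E).1
  have hsum2 : D2.sum = c := by rw [h2]; exact (aux_sum E).2
  have hS : D.sum = 2 * c := by
    rw [← hD, Multiset.sum_add, hsum1, hsum2]; ring
  have hle1 : ∀ d ∈ D1, d ≤ c := by
    intro d hd
    rw [h1] at hd
    obtain ⟨u, -, rfl⟩ := Multiset.mem_map.mp hd
    exact Finset.card_filter_le E _
  have hle2 : ∀ d ∈ D2, d ≤ c := by
    intro d hd
    rw [h2] at hd
    obtain ⟨v, -, rfl⟩ := Multiset.mem_map.mp hd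
    exact Finset.card_filter_le E _
  rcases h with ⟨d, hd, hgt⟩ | ⟨hcard, hne⟩
  · rw [← hD, Multiset.mem_add] at hd
    rcases hd with hd | hd
    · have := hle1 d hd; omega
    · have := hle2 d hd; omega
  · -- second case
    have hfilt : D.filter (fun d => 2 * d = D.sum) = D.filter (fun d => d = c) := by
      apply Multiset.filter_congr
      intro d _
      constructor <;> intro hh <;> omega
    rw [hfilt] at hcard
    rw [← hD, Multiset.filter_add, Multiset.card_add] at hcard
    -- each side's filter
    have key : ∀ (M : Multiset ℕ), M.sum = c → (∀ d ∈ M, d ≤ c) →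
        (∀ d ∈ M, 0 < d) → 1 ≤ Multiset.card (M.filter (fun d => d = c)) → M = {c} := by
      intro M hsM hleM hposM h1M
      have hne : c ∈ M := by
        obtain ⟨x, hx⟩ := (Multiset.card_pos_iff_exists_mem
          (s := M.filter (fun d => d = c))).mp h1M
        rw [Multiset.mem_filter] at hx
        obtain ⟨hx2, hx1⟩ := hx
        rwa [← hx1]
      exact aux_eq_single hposM hsM hne
    have hone : ∀ (M : Multiset ℕ), M.sum = c → (∀ d ∈ M, 0 < d) →
        Multiset.card (M.filter (fun d => d = c)) ≤ 1 := by
      intro M hsM hposM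
      by_contra hcon
      push_neg at hcon
      set F := M.filter (fun d => d = c) with hF
      have hrep : F = Multiset.replicate (Multiset.card F) c := by
        rw [Multiset.eq_replicate_card]
        intro b hb
        rw [hF, Multiset.mem_filter] at hb
        exact hb.2
      have hFle : F.sum ≤ M.sum := by
        obtain ⟨u, hu⟩ := Multiset.le_iff_exists_add.mp (Multiset.filter_le (fun d => d = c) M)
        rw [← hF] at hu
        rw [hu, Multiset.sum_add]
        omega
      rw [hrep, Multiset.sum_replicate, smul_eq_mul, hsM] at hFle
      have hcpos : 0 < c := by
        have : c ∈ F := by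
          rw [hrep]; exact Multiset.mem_replicate.mpr ⟨by omega, rfl⟩
        exact hposM c (Multiset.mem_of_mem_filter this)
      nlinarith
    have hpos1 : ∀ d ∈ D1, 0 < d := fun d hd => hpos d (by rw [← hD]; exact Multiset.mem_add.mpr (Or.inl hd))
    have hpos2 : ∀ d ∈ D2, 0 < d := fun d hd => hpos d (by rw [← hD]; exact Multiset.mem_add.mpr (Or.inr hd))
    have ho1 := hone D1 hsum1 hpos1
    have ho2 := hone D2 hsum2 hpos2
    have hD1 : D1 = {c} := key D1 hsum1 hle1 hpos1 (by omega)
    have hD2 : D2 = {c} := key D2 hsum2 hle2 hpos2 (by omega)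
    have hc1 : Multiset.card D1 = 1 := by rw [hD1]; rfl
    have hc2 : Multiset.card D2 = 1 := by rw [hD2]; rfl
    have hEle : E.card ≤ 1 := by
      have := Finset.card_le_univ E
      rw [Fintype.card_prod, Fintype.card_fin, Fintype.card_fin] at this
      exact this.trans (by simp [hc1, hc2])
    have hcpos : 0 < c := by
      have : c ∈ D1 := by rw [hD1]; exact Multiset.mem_singleton_self c
      exact hpos1 c this
    have hc1' : c = 1 := by omega
    apply hne
    rw [← hD, hD1, hD2, hc1']
    rfl
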